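/- (Partial q-difference equation in x for 2D q-Euler polynomials.) For every n ≥ 1: Σ_{k=1}^{n} (q^{n−k}/[k]_q!) (α_k^E + [k]_q β_{k−1}^E y) D_{q,x}^{k} E_{n,q}(x,y) + q^{n} x · D_{q,x} E_{n,q}(x,y) − [n]_q · E_{n,q}(qx,y) = 0, where E_{n,q}(qx,y) denotes the polynomial obtained from E_{n,q}(x,y) by substituting qx for x. -/

import Mathlib

noncomputable section

open Finset MvPolynomial

/-- The `q`-integer `[n]_q = 1 + q + ⋯ + q^(n-1)`. -/
def qInt {K : Type*} [Field K] (q : K) (n : ℕ) : K := ∑ i ∈ Finset.range n, q ^ i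

/-- The `q`-factorial `[n]_q! = [1]_q [2]_q ⋯ [n]_q`. -/
def qFact {K : Type*} [Field K] (q : K) (n : ℕ) : K := ∏ k ∈ Finset.range n, qInt q (k + 1)

/-- The `q`-binomial coefficient `[n choose k]_q`. -/
def qChoose {K : Type*} [Field K] (q : K) (n k : ℕ) : K :=
  qFact q n / (qFact q k * qFact q (n - k))

/-- The partial `q`-derivative in the variable `v` (v = 0 is `x`, v = 1 is `y`),
the linear operator determined by `D_{q,x}(x^m y^l) = [m]_q x^(m-1) y^l` and
`D_{q,y}(x^m y^l) = [l]_q x^m y^(l-1)`. -/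
def qDeriv {K : Type*} [Field K] (q : K) (v : Fin 2) (P : MvPolynomial (Fin 2) K) :
    MvPolynomial (Fin 2) K :=
  ∑ m ∈ P.support, monomial (m - Finsupp.single v 1) (P.coeff m * qInt q (m v))

/-- Substitution `x ↦ c·x` in a polynomial in the two variables `x = X 0`, `y = X 1`. -/
def substX {K : Type*} [Field K] (c : K) (P : MvPolynomial (Fin 2) K) :
    MvPolynomial (Fin 2) K :=
  aeval (fun i : Fin 2 => if i = 0 then C c * X 0 else X 1) P

/-- Substitution `y ↦ c·y` in a polynomial in the two variables `x = X 0`, `y = X 1`. -/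
def substY {K : Type*} [Field K] (c : K) (P : MvPolynomial (Fin 2) K) :
    MvPolynomial (Fin 2) K :=
  aeval (fun i : Fin 2 => if i = 0 then X 0 else C c * X 1) P

/-- The 2D `q`-Appell polynomials attached to a coefficient sequence `a`:
`A_{n,q}(x,y) = Σ_{i+j+k=n} ([n]_q!/([i]_q![j]_q![k]_q!)) a_i q^(k(k-1)/2) x^j y^k`. -/
def appell {K : Type*} [Field K] (q : K) (a : ℕ → K) (n : ℕ) : MvPolynomial (Fin 2) K :=
  ∑ i ∈ Finset.range (n + 1), ∑ j ∈ Finset.range (n + 1 - i),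
    monomial (Finsupp.single (0 : Fin 2) j + Finsupp.single (1 : Fin 2) (n - i - j))
      (qFact q n / (qFact q i * qFact q j * qFact q (n - i - j)) * a i *
        q ^ ((n - i - j) * (n - i - j - 1) / 2))


section Basic
variable {K : Type*} [Field K] (q : K)

lemma qInt_zero : qInt q 0 = 0 := by simp [qInt]

lemma qInt_mul_sub_one (n : ℕ) : qInt q n * (q - 1) = q ^ n - 1 := geom_sum_mul q n

lemma qFact_zero : qFact q 0 = 1 := by simp [qFact]

lemma qFact_succ (n : ℕ) : qFact q (n + 1) = qFact q n * qInt q (n + 1) :=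
  Finset.prod_range_succ _ n

lemma qFact_ne_zero (hq : ∀ n : ℕ, 1 ≤ n → qInt q n ≠ 0) (n : ℕ) : qFact q n ≠ 0 :=
  Finset.prod_ne_zero_iff.2 fun k _ => hq (k + 1) (Nat.succ_le_succ (Nat.zero_le k))

lemma qFact_pred (n : ℕ) (hn : 1 ≤ n) : qFact q n = qFact q (n - 1) * qInt q n := by
  conv_lhs => rw [show n = (n - 1) + 1 by omega]
  rw [qFact_succ, show n - 1 + 1 = n by omega]

lemma qInt_split (hq1 : q ≠ 1) (a b s : ℕ) :
    q ^ (a + b) * qInt q s + q ^ a * qInt q b + q ^ (a + b + s) * qInt q a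
      = q ^ a * qInt q (a + b + s) := by
  have h : q - 1 ≠ 0 := sub_ne_zero.mpr hq1
  apply mul_right_cancel₀ h
  have e1 := qInt_mul_sub_one q s
  have e2 := qInt_mul_sub_one q b
  have e3 := qInt_mul_sub_one q a
  have e4 := qInt_mul_sub_one q (a + b + s)
  calc (q ^ (a + b) * qInt q s + q ^ a * qInt q b + q ^ (a + b + s) * qInt q a) * (q - 1)
      = q ^ (a + b) * (qInt q s * (q - 1)) + q ^ a * (qInt q b * (q - 1))
        + q ^ (a + b + s) * (qInt q a * (q - 1)) := by ring
    _ = q ^ (a + b) * (q ^ s - 1) + q ^ a * (q ^ b - 1) + q ^ (a + b + s) * (q ^ a - 1) := by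
        rw [e1, e2, e3]
    _ = q ^ a * (q ^ (a + b + s) - 1) := by rw [pow_add, pow_add, pow_add]; ring
    _ = q ^ a * (qInt q (a + b + s) * (q - 1)) := by rw [e4]
    _ = q ^ a * qInt q (a + b + s) * (q - 1) := by ring

lemma tri_succ (b : ℕ) (hb : 1 ≤ b) : b * (b - 1) / 2 = (b - 1) * (b - 2) / 2 + (b - 1) := by
  obtain ⟨c, rfl⟩ : ∃ c, b = c + 1 := ⟨b - 1, by omega⟩
  rcases c with _ | d
  · simp
  · have h : (d + 2) * (d + 1) = (d + 1) * d + 2 * (d + 1) := by ring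
    have he : 2 ∣ (d + 1) * d := by
      have := Nat.even_mul_succ_self d
      exact (by rwa [mul_comm] at this : Even ((d+1) * d)).two_dvd
    simp only [show d + 1 + 1 = d + 2 from rfl, show d + 2 - 1 = d + 1 from rfl,
      show d + 2 - 2 = d from rfl]
    omega
end Basic

section PS
open PowerSeries
variable {K : Type*} [Field K] [CharZero K] (q : K) (E : ℕ → K)

def Fser : PowerSeries K := PowerSeries.mk fun n => E n / qFact q n
def Gser : PowerSeries K := PowerSeries.mk fun n => q ^ n * E n / qFact q n
def eser : PowerSeries K := PowerSeries.mk fun n => 1 / qFact q n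
def fser : PowerSeries K := PowerSeries.mk fun n => q ^ n / qFact q n

variable (hq : ∀ n : ℕ, 1 ≤ n → qInt q n ≠ 0)
variable (hE0 : E 0 = 1)
variable (hE : ∀ n : ℕ, 1 ≤ n → E n + ∑ k ∈ Finset.range (n + 1), qChoose q n k * E k = 0)

include hq hE0 hE in
lemma oneE_mul_F : (1 + eser q) * Fser q E = PowerSeries.C 2 := by
  ext n
  rw [PowerSeries.coeff_mul]
  have hcoeff : ∀ p : ℕ × ℕ, p ∈ Finset.HasAntidiagonal.antidiagonal n →
      (PowerSeries.coeff p.1) (1 + eser q) * (PowerSeries.coeff p.2) (Fser q E)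
        = (if p.1 = 0 then E p.2 / qFact q p.2 else 0)
          + 1 / qFact q p.1 * (E p.2 / qFact q p.2) := by
    intro p _
    rw [map_add, PowerSeries.coeff_one, Fser, eser, PowerSeries.coeff_mk, PowerSeries.coeff_mk]
    split_ifs <;> ring
  rw [Finset.sum_congr rfl hcoeff, Finset.sum_add_distrib]
  rw [Finset.Nat.sum_antidiagonal_eq_sum_range_succ_mk, Finset.Nat.sum_antidiagonal_eq_sum_range_succ_mk]
  have h1 : ∑ k ∈ Finset.range (n + 1), (if k = 0 then E (n - k) / qFact q (n - k) else 0)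
      = E n / qFact q n := by
    rw [Finset.sum_ite_eq' (Finset.range (n + 1)) 0]
    simp
  rw [h1]
  have h2 : ∑ k ∈ Finset.range (n + 1), 1 / qFact q k * (E (n - k) / qFact q (n - k))
      = (∑ k ∈ Finset.range (n + 1), qChoose q n k * E k) / qFact q n := by
    rw [Finset.sum_div]
    rw [← Finset.sum_range_reflect]
    simp only [Nat.add_sub_cancel]
    apply Finset.sum_congr rfl
    intro k hk
    have hk' : k ≤ n := by simpa [Nat.lt_succ_iff] using hk
    have h3 : n - (n - k) = k := by omega
    rw [h3]
    have hfk := qFact_ne_zero q hq k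
    have hfnk := qFact_ne_zero q hq (n - k)
    have hfn := qFact_ne_zero q hq n
    rw [qChoose]
    field_simp
  rw [h2]
  rcases Nat.eq_zero_or_pos n with rfl | hn
  · simp [hE0, qFact_zero, qChoose, PowerSeries.coeff_zero_eq_constantCoeff]
    norm_num
  · have hrec := hE n hn
    rw [PowerSeries.coeff_C, if_neg (by omega), ← add_div]
    rw [hrec, zero_div]

include hq hE0 hE in
lemma onef_mul_G : (1 + fser q) * Gser q E = PowerSeries.C 2 := by
  have base := oneE_mul_F q E hq hE0 hE
  ext n
  have key : (PowerSeries.coeff n) ((1 + fser q) * Gser q E)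
      = q ^ n * (PowerSeries.coeff n) ((1 + eser q) * Fser q E) := by
    rw [PowerSeries.coeff_mul, PowerSeries.coeff_mul, Finset.mul_sum]
    apply Finset.sum_congr rfl
    intro p hp
    obtain ⟨p1, p2⟩ := p
    have hpn : p1 + p2 = n := Finset.HasAntidiagonal.mem_antidiagonal.mp hp
    rw [map_add, map_add, PowerSeries.coeff_one,
      Fser, Gser, eser, fser, PowerSeries.coeff_mk, PowerSeries.coeff_mk,
      PowerSeries.coeff_mk, PowerSeries.coeff_mk, ← hpn, pow_add]
    split_ifs with h
    · subst h; ring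
    · ring
  rw [key, base]
  simp only [PowerSeries.coeff_C]
  split_ifs with h <;> simp [h]

include hq in
lemma fser_eq : fser q = eser (K := K) q + PowerSeries.C (q - 1) * PowerSeries.X * eser q := by
  ext n
  rcases n with _ | m
  · simp [eser, fser, qFact_zero]
  · rw [map_add, mul_assoc, PowerSeries.coeff_C_mul, PowerSeries.coeff_succ_X_mul,
      eser, fser, PowerSeries.coeff_mk, PowerSeries.coeff_mk, PowerSeries.coeff_mk,
      qFact_succ]
    have h := qInt_mul_sub_one q (m + 1)
    have h0 : qFact q m ≠ 0 := qFact_ne_zero q hq m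
    have h1 : qInt q (m + 1) ≠ 0 := hq (m + 1) (by omega)
    field_simp
    linear_combination (-1 : K) * h
end PS

section Key
open PowerSeries
variable {K : Type*} [Field K] [CharZero K] (q : K) (E αE βE : ℕ → K)

def Aser : PowerSeries K := PowerSeries.mk fun k => if k = 0 then 0 else αE k / qFact q k
def Bser : PowerSeries K := PowerSeries.mk fun l => βE l / qFact q l

variable (hq1 : q ≠ 1)
variable (hq : ∀ n : ℕ, 1 ≤ n → qInt q n ≠ 0)
variable (hE0 : E 0 = 1)
variable (hE : ∀ n : ℕ, 1 ≤ n → E n + ∑ k ∈ Finset.range (n + 1), qChoose q n k * E k = 0)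
variable (hαE : ∀ k : ℕ, 1 ≤ k →
      αE k = -(qInt q k / 2) * ∑ j ∈ Finset.range k, qChoose q (k - 1) j * E j)
variable (hβE0 : βE 0 = 1)
variable (hβE : ∀ m : ℕ, 1 ≤ m →
      βE m = ((q - 1) * qInt q m / 2) * ∑ j ∈ Finset.range m, qChoose q (m - 1) j * E j)

include hq hE0 hE in
lemma key_identity : Fser q E - Gser q E =
    PowerSeries.C ((q - 1) / 2) * PowerSeries.X * eser q * Fser q E * Gser q E := by
  have hU := oneE_mul_F q E hq hE0 hE
  have hV := onef_mul_G q E hq hE0 hE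
  have hL3 := fser_eq q hq (K := K)
  have hUV : (1 + eser (K := K) q) * (1 + fser q) ≠ 0 := by
    intro hcontra
    have h4 : PowerSeries.constantCoeff ((1 + eser (K := K) q) * (1 + fser q)) = 4 := by
      rw [map_mul, map_add, map_add, map_one]
      simp only [eser, fser, PowerSeries.constantCoeff_mk, qFact_zero]
      norm_num
    rw [hcontra, map_zero] at h4
    norm_num at h4
  apply mul_right_cancel₀ hUV
  have hC : PowerSeries.C ((q - 1) / 2) * PowerSeries.C 2 * PowerSeries.C 2
      = PowerSeries.C (q - 1) * PowerSeries.C 2 := by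
    rw [← map_mul, ← map_mul, ← map_mul]
    congr 1
    field_simp
  calc (Fser q E - Gser q E) * ((1 + eser q) * (1 + fser q))
      = (1 + fser q) * ((1 + eser q) * Fser q E) - (1 + eser q) * ((1 + fser q) * Gser q E) := by
        ring
    _ = (1 + fser q) * PowerSeries.C 2 - (1 + eser q) * PowerSeries.C 2 := by rw [hU, hV]
    _ = (fser q - eser q) * PowerSeries.C 2 := by ring
    _ = (PowerSeries.C (q - 1) * PowerSeries.X * eser q) * PowerSeries.C 2 := by
        rw [hL3]; ring
    _ = (PowerSeries.C ((q - 1) / 2) * PowerSeries.C 2 * PowerSeries.C 2)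
          * (PowerSeries.X * eser q) := by rw [hC]; ring
    _ = PowerSeries.C ((q - 1) / 2) * PowerSeries.X * eser q
          * ((1 + eser q) * Fser q E) * ((1 + fser q) * Gser q E) := by rw [hU, hV]; ring
    _ = PowerSeries.C ((q - 1) / 2) * PowerSeries.X * eser q * Fser q E * Gser q E
          * ((1 + eser q) * (1 + fser q)) := by ring

include hq in
lemma coeff_eF (n : ℕ) : (PowerSeries.coeff n) (eser q * Fser q E)
    = (∑ k ∈ Finset.range (n + 1), qChoose q n k * E k) / qFact q n := by
  rw [PowerSeries.coeff_mul]
  simp only [eser, Fser, PowerSeries.coeff_mk]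
  rw [Finset.Nat.sum_antidiagonal_eq_sum_range_succ_mk, Finset.sum_div,
    ← Finset.sum_range_reflect]
  simp only [Nat.succ_sub_one]
  apply Finset.sum_congr rfl
  intro k hk
  have hk' : k ≤ n := by simpa [Nat.lt_succ_iff] using hk
  have h3 : n - (n - k) = k := by omega
  rw [h3, qChoose]
  have hfk := qFact_ne_zero q hq k
  have hfnk := qFact_ne_zero q hq (n - k)
  have hfn := qFact_ne_zero q hq n
  field_simp

include hq hαE in
lemma Aser_eq : Aser q αE
    = PowerSeries.C (-(1/2)) * PowerSeries.X * (eser q * Fser q E) := by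
  ext n
  rcases n with _ | j
  · simp [Aser]
  · rw [mul_assoc, PowerSeries.coeff_C_mul, PowerSeries.coeff_succ_X_mul,
      coeff_eF q E hq j, Aser, PowerSeries.coeff_mk, if_neg (by omega),
      hαE (j + 1) (by omega)]
    simp only [Nat.add_sub_cancel]
    rw [qFact_succ]
    have hfj := qFact_ne_zero q hq j
    have hj1 := hq (j + 1) (by omega)
    field_simp

include hq hβE0 hβE in
lemma Bser_eq : Bser q βE
    = 1 + PowerSeries.C ((q - 1) / 2) * PowerSeries.X * (eser q * Fser q E) := by
  ext n
  rcases n with _ | j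
  · simp [Bser, hβE0, qFact_zero]
  · rw [map_add, mul_assoc, PowerSeries.coeff_C_mul, PowerSeries.coeff_succ_X_mul,
      coeff_eF q E hq j, Bser, PowerSeries.coeff_mk, PowerSeries.coeff_one,
      if_neg (by omega), hβE (j + 1) (by omega)]
    simp only [Nat.add_sub_cancel]
    rw [qFact_succ]
    have hfj := qFact_ne_zero q hq j
    have hj1 := hq (j + 1) (by omega)
    field_simp
    ring

include hq hE0 hE hαE in
lemma A_mul_G : PowerSeries.C (q - 1) * (Aser q αE * Gser q E)
    = Gser q E - Fser q E := by
  have hkey := key_identity q E hq hE0 hE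
  rw [Aser_eq q E αE hq hαE]
  have hc : PowerSeries.C (q - 1) * PowerSeries.C (-(1/2))
      = - PowerSeries.C ((q - 1) / 2) := by
    rw [← map_mul, ← map_neg]
    congr 1
    ring
  linear_combination (PowerSeries.X * (eser q * Fser q E) * Gser q E) * hc + hkey

include hq hE0 hE hβE0 hβE in
lemma B_mul_G : Bser q βE * Gser q E = Fser q E := by
  have hkey := key_identity q E hq hE0 hE
  rw [Bser_eq q E βE hq hβE0 hβE]
  linear_combination -hkey

include hq1 hq hE0 hE hαE in
lemma identA (s : ℕ) :
    ∑ k ∈ Finset.Icc 1 s, q ^ (s - k) * αE k * E (s - k) / (qFact q k * qFact q (s - k))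
      = qInt q s * E s / qFact q s := by
  have h := congrArg (PowerSeries.coeff s) (A_mul_G q E αE hq hE0 hE hαE)
  rw [PowerSeries.coeff_C_mul, map_sub, PowerSeries.coeff_mul,
    Finset.Nat.sum_antidiagonal_eq_sum_range_succ_mk] at h
  simp only [Aser, Gser, Fser, PowerSeries.coeff_mk] at h
  have hsub : Finset.Icc 1 s ⊆ Finset.range (s + 1) := by
    intro x hx
    simp only [Finset.mem_Icc] at hx
    simp only [Finset.mem_range]
    omega
  have hsum : ∑ k ∈ Finset.range (s + 1),
        (if k = 0 then 0 else αE k / qFact q k) * (q ^ (s - k) * E (s - k) / qFact q (s - k))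
      = ∑ k ∈ Finset.Icc 1 s,
        q ^ (s - k) * αE k * E (s - k) / (qFact q k * qFact q (s - k)) := by
    rw [← Finset.sum_subset hsub]
    · apply Finset.sum_congr rfl
      intro k hk
      have hk1 : 1 ≤ k := (Finset.mem_Icc.mp hk).1
      rw [if_neg (by omega)]
      ring
    · intro x _ hx
      have : x = 0 := by
        simp only [Finset.mem_Icc, not_and, not_le] at hx
        by_contra hne
        have := hx (by omega)
        have hxr : x ≤ s := by
          have := hsub
          simp only [Finset.mem_range] at *
          omega
        omega
      rw [this, if_pos rfl, zero_mul]
  rw [hsum] at h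
  have hq1' : q - 1 ≠ 0 := sub_ne_zero.mpr hq1
  apply mul_left_cancel₀ hq1'
  rw [h]
  have hgeom := qInt_mul_sub_one q s
  have hnum : q ^ s * E s - E s = (q - 1) * (qInt q s * E s) := by
    linear_combination (-(E s)) * hgeom
  rw [div_sub_div_same, ← mul_div_assoc, hnum]

include hq hE0 hE hβE0 hβE in
lemma identB (s : ℕ) :
    ∑ l ∈ Finset.range (s + 1), q ^ (s - l) * βE l * E (s - l) / (qFact q l * qFact q (s - l))
      = E s / qFact q s := by
  have h := congrArg (PowerSeries.coeff s) (B_mul_G q E βE hq hE0 hE hβE0 hβE)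
  rw [PowerSeries.coeff_mul, Finset.Nat.sum_antidiagonal_eq_sum_range_succ_mk] at h
  simp only [Bser, Gser, Fser, PowerSeries.coeff_mk] at h
  rw [← h]
  apply Finset.sum_congr rfl
  intro l _
  ring
end Key

section Poly
open MvPolynomial
variable {K : Type*} [Field K] [CharZero K] (q : K)

/-- coefficient function of `appell`. -/
def appc (E : ℕ → K) (t a b : ℕ) : K :=
  if a + b ≤ t then
    qFact q t / (qFact q (t - a - b) * qFact q a * qFact q b) * E (t - a - b)
      * q ^ (b * (b - 1) / 2)
  else 0

lemma fin2_eta (m : Fin 2 →₀ ℕ) :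
    Finsupp.single (0 : Fin 2) (m 0) + Finsupp.single (1 : Fin 2) (m 1) = m := by
  ext v
  fin_cases v <;> simp

lemma single_pair_eq_iff {j k : ℕ} {m : Fin 2 →₀ ℕ} :
    Finsupp.single (0 : Fin 2) j + Finsupp.single (1 : Fin 2) k = m ↔ j = m 0 ∧ k = m 1 := by
  constructor
  · intro h
    constructor
    · have := DFunLike.congr_fun h 0; simpa using this
    · have := DFunLike.congr_fun h 1; simpa using this
  · rintro ⟨rfl, rfl⟩
    exact fin2_eta m

lemma coeff_appell (E : ℕ → K) (n : ℕ) (m : Fin 2 →₀ ℕ) :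
    MvPolynomial.coeff m (appell q E n) = appc q E n (m 0) (m 1) := by
  unfold appell appc
  rw [MvPolynomial.coeff_sum]
  simp only [MvPolynomial.coeff_sum, MvPolynomial.coeff_monomial]
  by_cases h : m 0 + m 1 ≤ n
  · rw [if_pos h]
    rw [Finset.sum_eq_single_of_mem (n - m 0 - m 1) (by simp only [Finset.mem_range]; omega)]
    · rw [Finset.sum_eq_single_of_mem (m 0)
        (by simp only [Finset.mem_range]; omega)]
      · have e1 : n - (n - m 0 - m 1) - m 0 = m 1 := by omega
        rw [e1, if_pos (fin2_eta m)]
      · intro j _ hne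
        rw [if_neg]
        intro heq
        exact hne (single_pair_eq_iff.mp heq).1
    · intro i hi hne
      apply Finset.sum_eq_zero
      intro j hj
      rw [if_neg]
      intro heq
      obtain ⟨h1, h2⟩ := single_pair_eq_iff.mp heq
      simp only [Finset.mem_range] at hi hj
      omega
  · rw [if_neg h]
    apply Finset.sum_eq_zero
    intro i hi
    apply Finset.sum_eq_zero
    intro j hj
    rw [if_neg]
    intro heq
    obtain ⟨h1, h2⟩ := single_pair_eq_iff.mp heq
    simp only [Finset.mem_range] at hi hj
    omega

lemma coeff_qDeriv (v : Fin 2) (P : MvPolynomial (Fin 2) K) (m : Fin 2 →₀ ℕ) :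
    MvPolynomial.coeff m (qDeriv q v P)
      = qInt q (m v + 1) * MvPolynomial.coeff (m + Finsupp.single v 1) P := by
  unfold qDeriv
  rw [MvPolynomial.coeff_sum]
  simp only [MvPolynomial.coeff_monomial]
  have hkey : ∀ μ : Fin 2 →₀ ℕ, μ - Finsupp.single v 1 = m →
      μ ≠ m + Finsupp.single v 1 → μ v = 0 := by
    intro μ hsubm hne
    by_contra hv
    apply hne
    ext w
    have hw := DFunLike.congr_fun hsubm w
    rw [Finsupp.tsub_apply] at hw
    rw [Finsupp.add_apply]
    rcases eq_or_ne w v with rfl | hwv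
    · rw [Finsupp.single_eq_same] at hw ⊢
      omega
    · rw [Finsupp.single_eq_of_ne hwv] at hw ⊢
      omega
  by_cases hmem : m + Finsupp.single v 1 ∈ P.support
  · rw [Finset.sum_eq_single_of_mem _ hmem]
    · rw [if_pos (add_tsub_cancel_right m (Finsupp.single v 1))]
      simp only [Finsupp.coe_add, Pi.add_apply, Finsupp.single_eq_same]
      ring
    · intro μ _ hne
      split_ifs with hcond
      · rw [hkey μ hcond hne, qInt_zero, mul_zero]
      · rfl
  · have hz : (∑ μ ∈ P.support, if μ - Finsupp.single v 1 = m
        then MvPolynomial.coeff μ P * qInt q (μ v) else 0) = 0 := by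
      apply Finset.sum_eq_zero
      intro μ hμ
      split_ifs with hcond
      · have hne : μ ≠ m + Finsupp.single v 1 := fun h => hmem (h ▸ hμ)
        rw [hkey μ hcond hne, qInt_zero, mul_zero]
      · rfl
    rw [hz, MvPolynomial.notMem_support_iff.mp hmem, mul_zero]

lemma qDeriv_C_mul (v : Fin 2) (c : K) (P : MvPolynomial (Fin 2) K) :
    qDeriv q v (MvPolynomial.C c * P) = MvPolynomial.C c * qDeriv q v P := by
  apply MvPolynomial.ext
  intro m
  rw [MvPolynomial.coeff_C_mul, coeff_qDeriv, coeff_qDeriv, MvPolynomial.coeff_C_mul]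
  ring

variable (hq : ∀ n : ℕ, 1 ≤ n → qInt q n ≠ 0)

include hq in
lemma qDeriv_appell (E : ℕ → K) (n : ℕ) (hn : 1 ≤ n) :
    qDeriv q 0 (appell q E n) = MvPolynomial.C (qInt q n) * appell q E (n - 1) := by
  apply MvPolynomial.ext
  intro m
  rw [coeff_qDeriv, MvPolynomial.coeff_C_mul, coeff_appell, coeff_appell]
  simp only [Finsupp.coe_add, Pi.add_apply, Finsupp.single_eq_same,
    Finsupp.single_eq_of_ne (show (1 : Fin 2) ≠ 0 by decide), add_zero]
  unfold appc
  by_cases h : m 0 + 1 + m 1 ≤ n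
  · rw [if_pos h, if_pos (by omega : m 0 + m 1 ≤ n - 1)]
    have e1 : n - (m 0 + 1) - m 1 = n - 1 - m 0 - m 1 := by omega
    rw [e1, qFact_pred q n hn, qFact_succ q (m 0)]
    have hf1 := qFact_ne_zero q hq (n - 1 - m 0 - m 1)
    have hf2 := qFact_ne_zero q hq (m 0)
    have hf3 := qFact_ne_zero q hq (m 1)
    have hf4 := qFact_ne_zero q hq (n - 1)
    have hf5 := hq (m 0 + 1) (by omega)
    have hf6 := hq n hn
    field_simp
  · rw [if_neg h, if_neg (by omega : ¬(m 0 + m 1 ≤ n - 1)), mul_zero, mul_zero]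

include hq in
lemma qDeriv_iterate (E : ℕ → K) (n k : ℕ) (hk : k ≤ n) :
    (qDeriv q 0)^[k] (appell q E n)
      = MvPolynomial.C (qFact q n / qFact q (n - k)) * appell q E (n - k) := by
  induction k with
  | zero =>
    rw [Function.iterate_zero_apply, Nat.sub_zero, div_self (qFact_ne_zero q hq n),
      map_one, one_mul]
  | succ k ih =>
    have hk' : k ≤ n := by omega
    rw [Function.iterate_succ_apply', ih hk', qDeriv_C_mul,
      qDeriv_appell q hq E (n - k) (by omega), ← mul_assoc, ← map_mul]
    have e1 : n - k - 1 = n - (k + 1) := by omega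
    rw [e1]
    congr 2
    rw [qFact_pred q (n - k) (by omega), e1]
    have hf1 := qFact_ne_zero q hq (n - (k + 1))
    have hf2 := hq (n - k) (by omega)
    field_simp

lemma substX_monomial (c : K) (μ : Fin 2 →₀ ℕ) (a : K) :
    substX c (MvPolynomial.monomial μ a) = MvPolynomial.monomial μ (c ^ μ 0 * a) := by
  unfold substX
  rw [MvPolynomial.aeval_monomial, Finsupp.prod_fintype _ _ (fun i => pow_zero _),
    Fin.prod_univ_two]
  simp only [eq_self_iff_true, if_true, if_neg (by decide : ¬((1 : Fin 2) = 0))]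
  rw [MvPolynomial.algebraMap_eq, mul_pow, ← map_pow, MvPolynomial.X_pow_eq_monomial,
    MvPolynomial.X_pow_eq_monomial, MvPolynomial.C_mul_monomial,
    MvPolynomial.monomial_mul, MvPolynomial.C_mul_monomial, mul_one]
  rw [fin2_eta]
  congr 1
  ring

lemma coeff_substX (c : K) (P : MvPolynomial (Fin 2) K) (m : Fin 2 →₀ ℕ) :
    MvPolynomial.coeff m (substX c P) = c ^ m 0 * MvPolynomial.coeff m P := by
  have hsum : substX c P
      = ∑ μ ∈ P.support, MvPolynomial.monomial μ (c ^ μ 0 * MvPolynomial.coeff μ P) := by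
    calc substX c P
        = substX c (∑ μ ∈ P.support, MvPolynomial.monomial μ (MvPolynomial.coeff μ P)) := by
          rw [← MvPolynomial.as_sum]
      _ = ∑ μ ∈ P.support, substX c (MvPolynomial.monomial μ (MvPolynomial.coeff μ P)) := by
          unfold substX; exact map_sum _ _ _
      _ = ∑ μ ∈ P.support, MvPolynomial.monomial μ (c ^ μ 0 * MvPolynomial.coeff μ P) :=
          Finset.sum_congr rfl fun μ _ => substX_monomial c μ _
  rw [hsum, MvPolynomial.coeff_sum]
  simp only [MvPolynomial.coeff_monomial]
  rw [Finset.sum_ite_eq' P.support m]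
  split_ifs with hmem
  · rfl
  · rw [MvPolynomial.notMem_support_iff.mp hmem, mul_zero]

lemma coeff_term (E : ℕ → K) (c α β d : K) (t : ℕ) (m : Fin 2 →₀ ℕ) :
    MvPolynomial.coeff m (MvPolynomial.C c
        * (MvPolynomial.C α + MvPolynomial.C β * MvPolynomial.X 1)
        * (MvPolynomial.C d * appell q E t))
      = c * d * (α * appc q E t (m 0) (m 1)
          + β * (if 1 ≤ m 1 then appc q E t (m 0) (m 1 - 1) else 0)) := by
  have hrw : MvPolynomial.C c
        * (MvPolynomial.C α + MvPolynomial.C β * MvPolynomial.X 1)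
        * (MvPolynomial.C d * appell q E t)
      = MvPolynomial.C (c * α * d) * appell q E t
        + MvPolynomial.C (c * β * d) * (appell q E t * MvPolynomial.X 1) := by
    rw [map_mul, map_mul, map_mul, map_mul]
    ring
  rw [hrw, MvPolynomial.coeff_add, MvPolynomial.coeff_C_mul, MvPolynomial.coeff_C_mul,
    MvPolynomial.coeff_mul_X', coeff_appell]
  by_cases hb : 1 ≤ m 1
  · rw [if_pos (Finsupp.mem_support_iff.mpr (by omega)), if_pos hb, coeff_appell]
    simp only [Finsupp.coe_tsub, Pi.sub_apply, Finsupp.single_eq_same,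
      Finsupp.single_eq_of_ne (show (0 : Fin 2) ≠ 1 by decide), Nat.sub_zero]
    ring
  · rw [if_neg (fun hmem => hb (by have := Finsupp.mem_support_iff.mp hmem; omega)),
      if_neg hb]
    ring

lemma coeff_Xmul (E : ℕ → K) (c d : K) (t : ℕ) (m : Fin 2 →₀ ℕ) :
    MvPolynomial.coeff m (MvPolynomial.C c * MvPolynomial.X 0
        * (MvPolynomial.C d * appell q E t))
      = c * d * (if 1 ≤ m 0 then appc q E t (m 0 - 1) (m 1) else 0) := by
  have hrw : MvPolynomial.C c * MvPolynomial.X 0 * (MvPolynomial.C d * appell q E t)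
      = MvPolynomial.C (c * d) * (appell q E t * MvPolynomial.X 0) := by
    rw [map_mul]
    ring
  rw [hrw, MvPolynomial.coeff_C_mul, MvPolynomial.coeff_mul_X']
  by_cases ha : 1 ≤ m 0
  · rw [if_pos (Finsupp.mem_support_iff.mpr (by omega)), if_pos ha, coeff_appell]
    simp only [Finsupp.coe_tsub, Pi.sub_apply, Finsupp.single_eq_same,
      Finsupp.single_eq_of_ne (show (1 : Fin 2) ≠ 0 by decide), Nat.sub_zero]
  · rw [if_neg (fun hmem => ha (by have := Finsupp.mem_support_iff.mp hmem; omega)),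
      if_neg ha]
end Poly

section MainScalar
variable {K : Type*} [Field K] [CharZero K] (q : K) (E αE βE : ℕ → K)
variable (hq1 : q ≠ 1)
variable (hq : ∀ n : ℕ, 1 ≤ n → qInt q n ≠ 0)
variable (hE0 : E 0 = 1)
variable (hE : ∀ n : ℕ, 1 ≤ n → E n + ∑ k ∈ Finset.range (n + 1), qChoose q n k * E k = 0)
variable (hαE : ∀ k : ℕ, 1 ≤ k →
      αE k = -(qInt q k / 2) * ∑ j ∈ Finset.range k, qChoose q (k - 1) j * E j)
variable (hβE0 : βE 0 = 1)
variable (hβE : ∀ m : ℕ, 1 ≤ m →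
      βE m = ((q - 1) * qInt q m / 2) * ∑ j ∈ Finset.range m, qChoose q (m - 1) j * E j)

include hq1 hq hE0 hE hαE hβE0 hβE in
lemma main_scalar (n : ℕ) (hn : 1 ≤ n) (a b : ℕ) :
    (∑ k ∈ Finset.Icc 1 n,
          q ^ (n - k) / qFact q k * (qFact q n / qFact q (n - k)) *
            (αE k * appc q E (n - k) a b +
              qInt q k * βE (k - 1) * if 1 ≤ b then appc q E (n - k) a (b - 1) else 0) +
        q ^ n * qInt q n * if 1 ≤ a then appc q E (n - 1) (a - 1) b else 0) -
      qInt q n * (q ^ a * appc q E n a b) = 0 := by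
  by_cases hab : a + b ≤ n
  · -- main case
    set s := n - a - b with hs
    have hs' : n = a + b + s := by omega
    have hfa := qFact_ne_zero q hq a
    have hfb := qFact_ne_zero q hq b
    have hfs := qFact_ne_zero q hq s
    have hfn := qFact_ne_zero q hq n
    have hsum_split : ∑ k ∈ Finset.Icc 1 n,
        q ^ (n - k) / qFact q k * (qFact q n / qFact q (n - k)) *
          (αE k * appc q E (n - k) a b +
            qInt q k * βE (k - 1) * if 1 ≤ b then appc q E (n - k) a (b - 1) else 0)
      = (∑ k ∈ Finset.Icc 1 n, q ^ (n - k) / qFact q k * (qFact q n / qFact q (n - k)) *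
            (αE k * appc q E (n - k) a b))
        + ∑ k ∈ Finset.Icc 1 n, q ^ (n - k) / qFact q k * (qFact q n / qFact q (n - k)) *
            (qInt q k * βE (k - 1) * if 1 ≤ b then appc q E (n - k) a (b - 1) else 0) := by
      rw [← Finset.sum_add_distrib]
      exact Finset.sum_congr rfl fun k _ => by ring
    have hS1 : (∑ k ∈ Finset.Icc 1 n, q ^ (n - k) / qFact q k *
          (qFact q n / qFact q (n - k)) * (αE k * appc q E (n - k) a b))
        = qFact q n * q ^ (b * (b - 1) / 2) * E s / (qFact q a * qFact q b * qFact q s)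
            * (q ^ (a + b) * qInt q s) := by
      rw [← Finset.sum_subset (Finset.Icc_subset_Icc_right (show s ≤ n by omega))
        (by
          intro x hx hnx
          simp only [Finset.mem_Icc] at hx hnx
          have : ¬ (a + b ≤ n - x) := by omega
          unfold appc
          rw [if_neg this]
          ring)]
      have hstep2 : ∀ k ∈ Finset.Icc 1 s,
          q ^ (n - k) / qFact q k * (qFact q n / qFact q (n - k)) *
            (αE k * appc q E (n - k) a b)
          = qFact q n * q ^ (a + b) * q ^ (b * (b - 1) / 2) / (qFact q a * qFact q b)
              * (q ^ (s - k) * αE k * E (s - k) / (qFact q k * qFact q (s - k))) := by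
        intro k hk
        obtain ⟨hk1, hk2⟩ := Finset.mem_Icc.mp hk
        unfold appc
        rw [if_pos (show a + b ≤ n - k by omega),
          show n - k - a - b = s - k from by omega,
          show n - k = a + b + (s - k) from by omega, pow_add]
        have hfk := qFact_ne_zero q hq k
        have hfsk := qFact_ne_zero q hq (s - k)
        have hfnk := qFact_ne_zero q hq (a + b + (s - k))
        field_simp
      rw [Finset.sum_congr rfl hstep2, ← Finset.mul_sum,
        identA q E αE hq1 hq hE0 hE hαE s]
      field_simp
    have hS2 : (∑ k ∈ Finset.Icc 1 n, q ^ (n - k) / qFact q k *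
          (qFact q n / qFact q (n - k)) *
          (qInt q k * βE (k - 1) * if 1 ≤ b then appc q E (n - k) a (b - 1) else 0))
        = qFact q n * q ^ (b * (b - 1) / 2) * E s / (qFact q a * qFact q b * qFact q s)
            * (q ^ a * qInt q b) := by
      by_cases hb : 1 ≤ b
      · have hfb1 := qFact_ne_zero q hq (b - 1)
        rw [← Finset.sum_subset (Finset.Icc_subset_Icc_right (show s + 1 ≤ n by omega))
          (by
            intro x hx hnx
            simp only [Finset.mem_Icc] at hx hnx
            rw [if_pos hb]
            have : ¬ (a + (b - 1) ≤ n - x) := by omega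
            unfold appc
            rw [if_neg this]
            ring)]
        rw [← Finset.Ico_add_one_right_eq_Icc, Finset.sum_Ico_eq_sum_range]
        simp only [Nat.add_sub_cancel]
        have hstep2 : ∀ i ∈ Finset.range (s + 1),
            q ^ (n - (1 + i)) / qFact q (1 + i) * (qFact q n / qFact q (n - (1 + i))) *
              (qInt q (1 + i) * βE (1 + i - 1) *
                if 1 ≤ b then appc q E (n - (1 + i)) a (b - 1) else 0)
            = qFact q n * q ^ (a + (b - 1)) * q ^ ((b - 1) * (b - 2) / 2)
                / (qFact q a * qFact q (b - 1))
                * (q ^ (s - i) * βE i * E (s - i) / (qFact q i * qFact q (s - i))) := by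
          intro i hi
          have hi' : i ≤ s := by
            simp only [Finset.mem_range] at hi; omega
          rw [if_pos hb, show (1 + i - 1) = i from by omega]
          unfold appc
          rw [if_pos (show a + (b - 1) ≤ n - (1 + i) by omega),
            show n - (1 + i) - a - (b - 1) = s - i from by omega,
            show b - 1 - 1 = b - 2 from by omega,
            show (1 + i) = i + 1 from by omega, qFact_succ,
            show n - (i + 1) = a + (b - 1) + (s - i) from by omega, pow_add]
          have hfi := qFact_ne_zero q hq i
          have hfsi := qFact_ne_zero q hq (s - i)
          have hfni := qFact_ne_zero q hq (a + (b - 1) + (s - i))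
          have hqi1 := hq (i + 1) (by omega)
          field_simp
        rw [Finset.sum_congr rfl hstep2, ← Finset.mul_sum,
          identB q E βE hq hE0 hE hβE0 hβE s]
        rw [tri_succ b hb, pow_add, qFact_pred q b hb]
        have hqb := hq b hb
        field_simp
        ring
      · rw [Finset.sum_eq_zero (fun k _ => by rw [if_neg hb]; ring),
          show b = 0 from by omega, qInt_zero]
        ring
    have hS3 : (q ^ n * qInt q n * if 1 ≤ a then appc q E (n - 1) (a - 1) b else 0)
        = qFact q n * q ^ (b * (b - 1) / 2) * E s / (qFact q a * qFact q b * qFact q s)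
            * (q ^ (a + b + s) * qInt q a) := by
      by_cases ha : 1 ≤ a
      · rw [if_pos ha]
        unfold appc
        rw [if_pos (show a - 1 + b ≤ n - 1 by omega),
          show n - 1 - (a - 1) - b = s from by omega,
          qFact_pred q n hn, qFact_pred q a ha,
          show q ^ n = q ^ (a + b + s) from by rw [← hs']]
        have hfa1 := qFact_ne_zero q hq (a - 1)
        have hfn1 := qFact_ne_zero q hq (n - 1)
        have hqa := hq a ha
        have hqn := hq n hn
        field_simp
      · rw [if_neg ha, show a = 0 from by omega, qInt_zero]
        ring
    have hS4 : qInt q n * (q ^ a * appc q E n a b)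
        = qFact q n * q ^ (b * (b - 1) / 2) * E s / (qFact q a * qFact q b * qFact q s)
            * (q ^ a * qInt q n) := by
      unfold appc
      rw [if_pos hab, ← hs]
      field_simp
    rw [hsum_split, hS1, hS2, hS3, hS4,
      show qInt q n = qInt q (a + b + s) from by rw [← hs']]
    linear_combination (qFact q n * q ^ (b * (b - 1) / 2) * E s
        / (qFact q a * qFact q b * qFact q s)) * qInt_split q hq1 a b s
  · -- degenerate case
    have h1 : appc q E n a b = 0 := by unfold appc; rw [if_neg hab]
    have h2 : (if 1 ≤ a then appc q E (n - 1) (a - 1) b else 0) = 0 := by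
      split_ifs with ha
      · unfold appc; rw [if_neg (by omega)]
      · rfl
    have h3 : (∑ k ∈ Finset.Icc 1 n,
          q ^ (n - k) / qFact q k * (qFact q n / qFact q (n - k)) *
            (αE k * appc q E (n - k) a b +
              qInt q k * βE (k - 1) * if 1 ≤ b then appc q E (n - k) a (b - 1) else 0))
        = 0 := by
      apply Finset.sum_eq_zero
      intro k hk
      obtain ⟨hk1, hk2⟩ := Finset.mem_Icc.mp hk
      have e1 : appc q E (n - k) a b = 0 := by unfold appc; rw [if_neg (by omega)]
      have e2 : (if 1 ≤ b then appc q E (n - k) a (b - 1) else 0) = 0 := by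
        split_ifs with hb
        · unfold appc; rw [if_neg (by omega)]
        · rfl
      rw [e1, e2]
      ring
    rw [h1, h2, h3]
    ring
end MainScalar

/-- Partial `q`-difference equation in `x` for 2D `q`-Euler polynomials. -/
theorem qEuler2D_qDifference_x
    {K : Type*} [Field K] [CharZero K] (q : K) (hq0 : q ≠ 0) (hq1 : q ≠ 1)
    (hq : ∀ n : ℕ, 1 ≤ n → qInt q n ≠ 0)
    (E : ℕ → K) (hE0 : E 0 = 1)
    (hE : ∀ n : ℕ, 1 ≤ n → E n + ∑ k ∈ Finset.range (n + 1), qChoose q n k * E k = 0)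
    (αE βE : ℕ → K)
    (hαE : ∀ k : ℕ, 1 ≤ k →
      αE k = -(qInt q k / 2) * ∑ j ∈ Finset.range k, qChoose q (k - 1) j * E j)
    (hβE0 : βE 0 = 1)
    (hβE : ∀ m : ℕ, 1 ≤ m →
      βE m = ((q - 1) * qInt q m / 2) * ∑ j ∈ Finset.range m, qChoose q (m - 1) j * E j)
    (n : ℕ) (hn : 1 ≤ n) :
    (∑ k ∈ Finset.Icc 1 n, C (q ^ (n - k) / qFact q k) *
        (C (αE k) + C (qInt q k * βE (k - 1)) * X 1) * (qDeriv q 0)^[k] (appell q E n)) +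
      C (q ^ n) * X 0 * qDeriv q 0 (appell q E n) -
      C (qInt q n) * substX q (appell q E n) = 0 := by

  classical
  apply MvPolynomial.ext
  intro m
  rw [MvPolynomial.coeff_zero, MvPolynomial.coeff_sub, MvPolynomial.coeff_add,
    MvPolynomial.coeff_sum, qDeriv_appell q hq E n hn]
  have hterm : ∀ k ∈ Finset.Icc 1 n,
      MvPolynomial.coeff m (C (q ^ (n - k) / qFact q k) *
          (C (αE k) + C (qInt q k * βE (k - 1)) * X 1) * (qDeriv q 0)^[k] (appell q E n))
        = q ^ (n - k) / qFact q k * (qFact q n / qFact q (n - k)) *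
            (αE k * appc q E (n - k) (m 0) (m 1)
              + qInt q k * βE (k - 1) *
                (if 1 ≤ m 1 then appc q E (n - k) (m 0) (m 1 - 1) else 0)) := by
    intro k hk
    rw [qDeriv_iterate q hq E n k (Finset.mem_Icc.mp hk).2, coeff_term]
  rw [Finset.sum_congr rfl hterm, coeff_Xmul, MvPolynomial.coeff_C_mul, coeff_substX,
    coeff_appell]
  exact main_scalar q E αE βE hq1 hq hE0 hE hαE hβE0 hβE n hn (m 0) (m 1)
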